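/- arXiv:1302.1860 — 2 statements merged into one kernel-verified Lean document; each statement's English description precedes it below -/
import Mathlib

section
/- Let Δ_σ(Z) = (4π)^{-D/2} · Γ(−σ)Γ(σ+D−1)/Γ(D/2) · ₂F₁(−σ, σ+D−1; D/2; (1+Z)/2) and M²(σ) = −σ(σ+D−1). Then as M² → 0 (i.e. σ → 0), Δ_σ(Z) = 1/(M² vol(S^D)) + O(M⁰), where vol(S^D) = 2π^{(D+1)/2}/Γ((D+1)/2); in particular M²Δ_σ(Z) → 1/vol(S^D) as σ → 0, uniformly for Z in compact subsets of ℂ∖[1,∞). -/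
open Filter Topology


open Complex

/-- The Gauss hypergeometric series `₂F₁(a,b;c;z) = Σ (a)ₙ(b)ₙ/((c)ₙ n!) zⁿ`. -/
noncomputable def hyperSeries (a b c z : ℂ) : ℂ :=
  ∑' n : ℕ, ((ascPochhammer ℂ n).eval a * (ascPochhammer ℂ n).eval b) /
    ((ascPochhammer ℂ n).eval c * (Nat.factorial n : ℂ)) * z ^ n

/-- The complex plane cut along `[1,∞)`. -/
def cutPlane : Set ℂ := {z : ℂ | ¬(z.im = 0 ∧ 1 ≤ z.re)}

/-- `vol(S^D) = 2π^{(D+1)/2}/Γ((D+1)/2)`. -/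
noncomputable def volS (D : ℕ) : ℝ :=
  2 * Real.pi ^ (((D : ℝ) + 1) / 2) / Real.Gamma (((D : ℝ) + 1) / 2)

lemma hyperSeries_zero (b c w : ℂ) : hyperSeries 0 b c w = 1 := by
  unfold hyperSeries
  rw [tsum_eq_single 0]
  · simp
  · intro n hn
    simp [ascPochhammer_eval_zero, hn]

lemma cutPlane_open : IsOpen cutPlane := by
  have : IsClosed {z : ℂ | z.im = 0 ∧ 1 ≤ z.re} :=
    (isClosed_eq Complex.continuous_im continuous_const).inter
      (isClosed_le continuous_const Complex.continuous_re)
  exact this.isOpen_compl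

lemma zero_mem_cutPlane : (0 : ℂ) ∈ cutPlane := by
  simp [cutPlane]

lemma cutPlane_star : StarConvex ℝ (-1 : ℂ) cutPlane := by
  intro y hy a b ha hb hab
  by_contra h
  simp only [cutPlane, Set.mem_setOf_eq, not_not] at h
  obtain ⟨him, hre⟩ := h
  have him' : b * y.im = 0 := by
    simpa [Complex.add_im, Complex.real_smul, Complex.mul_im] using him
  have hre' : -a + b * y.re = (a • (-1 : ℂ) + b • y).re := by
    simp [Complex.add_re, Complex.real_smul, Complex.mul_re]
  rw [← hre'] at hre
  rcases eq_or_lt_of_le hb with hb0 | hb0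
  · rw [← hb0] at hre hab; simp at hab; rw [hab] at hre; norm_num at hre
  · have hyim : y.im = 0 := by
      rcases mul_eq_zero.1 him' with h | h
      · exact absurd h (ne_of_gt hb0)
      · exact h
    have hyre : y.re < 1 := by
      by_contra hge
      exact hy ⟨hyim, le_of_not_gt hge⟩
    nlinarith

lemma cutPlane_preconnected : IsPreconnected cutPlane := by
  have : ContractibleSpace cutPlane :=
    cutPlane_star.contractibleSpace ⟨0, zero_mem_cutPlane⟩
  rw [isPreconnected_iff_preconnectedSpace]
  infer_instance

lemma key_real (D : ℕ) (hD : 2 ≤ D) :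
    (4 * Real.pi) ^ (-(D : ℝ)/2) * (Real.Gamma (D : ℝ) / Real.Gamma ((D : ℝ)/2))
      = (volS D)⁻¹ := by
  set x : ℝ := (D : ℝ) with hxdef
  have hx : (2 : ℝ) ≤ x := by rw [hxdef]; exact_mod_cast hD
  have hπ : (0 : ℝ) < Real.pi := Real.pi_pos
  have hΓ2 : 0 < Real.Gamma (x/2) := Real.Gamma_pos_of_pos (by linarith)
  have hΓ1 : 0 < Real.Gamma ((x+1)/2) := Real.Gamma_pos_of_pos (by linarith)
  have hdup := Real.Gamma_mul_Gamma_add_half (x/2)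
  rw [show x/2 + 1/2 = (x+1)/2 by ring, show 2*(x/2) = x by ring] at hdup
  -- hdup : Γ(x/2) * Γ((x+1)/2) = Γ x * 2^(1-x) * √π
  have h2x : (0:ℝ) < (2:ℝ) ^ (1-x) := Real.rpow_pos_of_pos two_pos _
  have hsq : (0:ℝ) < Real.sqrt Real.pi := Real.sqrt_pos.2 hπ
  have hΓx : Real.Gamma x =
      Real.Gamma (x/2) * Real.Gamma ((x+1)/2) / ((2:ℝ)^(1-x) * Real.sqrt Real.pi) := by
    rw [eq_div_iff (by positivity)]
    linarith [hdup]
  -- rpow computations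
  set t : ℝ := (2:ℝ) ^ x with htdef
  set p : ℝ := Real.pi ^ (x/2) with hpdef
  set q : ℝ := Real.pi ^ (1/2 : ℝ) with hqdef
  have ht : 0 < t := Real.rpow_pos_of_pos two_pos _
  have hp : 0 < p := Real.rpow_pos_of_pos hπ _
  have hq : 0 < q := Real.rpow_pos_of_pos hπ _
  have e1 : (4 * Real.pi) ^ (-(x)/2) = (t * p)⁻¹ := by
    rw [show -(x)/2 = -(x/2) by ring, Real.rpow_neg (by positivity)]
    congr 1
    rw [Real.mul_rpow (by norm_num) hπ.le, htdef, hpdef]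
    congr 1
    rw [show (4:ℝ) = (2:ℝ) ^ (2:ℝ) by norm_num [Real.rpow_natCast 2 2], ← Real.rpow_mul (by norm_num)]
    ring_nf
  have e2 : (2:ℝ) ^ (1-x) = 2 / t := by
    rw [Real.rpow_sub two_pos, Real.rpow_one, htdef]
  have e3 : Real.sqrt Real.pi = q := Real.sqrt_eq_rpow _
  have e4 : Real.pi ^ ((x+1)/2) = p * q := by
    rw [show (x+1)/2 = x/2 + 1/2 by ring, Real.rpow_add hπ, hpdef, hqdef]
  rw [e1, hΓx, e2, e3]
  unfold volS
  rw [← hxdef, e4, inv_div]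
  field_simp

lemma key_complex (D : ℕ) (hD : 2 ≤ D) :
    (4 * (Real.pi : ℂ)) ^ (-(D : ℂ)/2) *
      (Complex.Gamma ((D : ℂ)) / Complex.Gamma ((D : ℂ)/2)) = ((volS D : ℝ) : ℂ)⁻¹ := by
  have h1 : (4 * (Real.pi : ℂ)) ^ (-(D : ℂ)/2) = (((4*Real.pi) ^ (-(D:ℝ)/2) : ℝ) : ℂ) := by
    rw [Complex.ofReal_cpow (by positivity : (0:ℝ) ≤ 4*Real.pi)]
    push_cast
    ring_nf
  have h2 : Complex.Gamma ((D : ℂ)) = ((Real.Gamma (D : ℝ) : ℝ) : ℂ) := by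
    rw [← Complex.Gamma_ofReal]; norm_cast
  have h3 : Complex.Gamma ((D : ℂ)/2) = ((Real.Gamma ((D:ℝ)/2) : ℝ) : ℂ) := by
    rw [← Complex.Gamma_ofReal]; push_cast; ring_nf
  rw [h1, h2, h3, ← Complex.ofReal_div, ← Complex.ofReal_mul, ← Complex.ofReal_inv]
  exact congrArg _ (key_real D hD)

lemma F_zero_eq_one (D : ℕ) (F : ℂ → ℂ → ℂ)
    (hFser : ∀ σ z : ℂ, ‖(1 + z) / 2‖ < 1 →
      F σ z = hyperSeries (-σ) (σ + (D : ℂ) - 1) ((D : ℂ) / 2) ((1 + z) / 2))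
    (hFz : ∀ σ : ℂ, DifferentiableOn ℂ (F σ) cutPlane) :
    Set.EqOn (F 0) (fun _ => (1 : ℂ)) cutPlane := by
  have hball : ∀ z : ℂ, z ∈ Metric.ball (-1 : ℂ) 2 → ‖(1 + z)/2‖ < 1 := by
    intro z hz
    rw [Metric.mem_ball, Complex.dist_eq, sub_neg_eq_add] at hz
    rw [norm_div, Complex.norm_two, div_lt_one (by norm_num), add_comm]
    exact hz
  have hmem : Metric.ball (-1 : ℂ) 2 ∈ 𝓝 (0 : ℂ) := by
    apply Metric.isOpen_ball.mem_nhds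
    rw [Metric.mem_ball, Complex.dist_eq]
    norm_num
  have hev : F 0 =ᶠ[𝓝 (0 : ℂ)] fun _ => (1 : ℂ) := by
    filter_upwards [hmem] with z hz
    rw [hFser 0 z (hball z hz), neg_zero, hyperSeries_zero]
  exact AnalyticOnNhd.eqOn_of_preconnected_of_eventuallyEq
    ((hFz 0).analyticOnNhd cutPlane_open) analyticOnNhd_const
    cutPlane_preconnected zero_mem_cutPlane hev

/-- `Δ_σ(Z) = (4π)^{-D/2} Γ(−σ)Γ(σ+D−1)/Γ(D/2) · F(σ,Z)`, where `F` is the analytic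
continuation of `₂F₁(−σ, σ+D−1; D/2; (1+Z)/2)` to the cut plane. -/
noncomputable def DeltaKG (D : ℕ) (F : ℂ → ℂ → ℂ) (σ z : ℂ) : ℂ :=
  (4 * (Real.pi : ℂ)) ^ (-(D : ℂ) / 2) *
    (Complex.Gamma (-σ) * Complex.Gamma (σ + (D : ℂ) - 1) / Complex.Gamma ((D : ℂ) / 2)) *
    F σ z

/-- With `M²(σ) = −σ(σ+D−1)`, as `σ → 0` one has `Δ_σ(Z) = 1/(M² vol(S^D)) + O(M⁰)`;
in particular `M²(σ)·Δ_σ(Z) → 1/vol(S^D)`, uniformly for `Z` in compact subsets of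
`ℂ∖[1,∞)`.  `F` is characterized as the analytic continuation of the hypergeometric
series: it agrees with the series on the unit disk of the argument `(1+Z)/2`, is
holomorphic in `Z` on the cut plane, and is jointly continuous. -/
theorem stmt5 (D : ℕ) (hD : 2 ≤ D) (F : ℂ → ℂ → ℂ)
    (hFser : ∀ σ z : ℂ, ‖(1 + z) / 2‖ < 1 →
      F σ z = hyperSeries (-σ) (σ + (D : ℂ) - 1) ((D : ℂ) / 2) ((1 + z) / 2))
    (hFz : ∀ σ : ℂ, DifferentiableOn ℂ (F σ) cutPlane)
    (hFcont : ContinuousOn (fun p : ℂ × ℂ => F p.1 p.2) ((Set.univ : Set ℂ) ×ˢ cutPlane)) :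
    ∀ K : Set ℂ, K ⊆ cutPlane → IsCompact K →
      TendstoUniformlyOn
        (fun σ z => (-σ * (σ + (D : ℂ) - 1)) * DeltaKG D F σ z)
        (fun _ => ((volS D : ℝ) : ℂ)⁻¹)
        (nhdsWithin (0 : ℂ) {(0 : ℂ)}ᶜ) K := by
  intro K hKsub hK
  set c : ℂ → ℂ := fun σ => (4 * (Real.pi : ℂ)) ^ (-(D : ℂ) / 2) *
    (Complex.Gamma (1 - σ) * Complex.Gamma (σ + (D : ℂ)) / Complex.Gamma ((D : ℂ) / 2))
    with hcdef
  set G : ℂ → ℂ → ℂ := fun σ z => c σ * F σ z with hGdef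
  set U : Set ℂ := Metric.closedBall (0 : ℂ) (1/2) with hUdef
  -- continuity of c on U
  have hc : ContinuousOn c U := by
    intro σ hσ
    apply ContinuousAt.continuousWithinAt
    have habs : ‖σ‖ ≤ 1/2 := by
      rw [hUdef] at hσ; rwa [Metric.mem_closedBall, Complex.dist_eq, sub_zero] at hσ
    have hre : |σ.re| ≤ 1/2 := le_trans (Complex.abs_re_le_norm σ) habs
    have h1 : ContinuousAt (fun σ : ℂ => Complex.Gamma (1 - σ)) σ := by
      apply ContinuousAt.comp
      · apply (Complex.differentiableAt_Gamma _ ?_).continuousAt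
        intro m hm
        have := congrArg Complex.re hm
        simp only [Complex.sub_re, Complex.one_re, Complex.neg_re, Complex.natCast_re] at this
        have : σ.re = 1 + m := by linarith
        have hmn : (0:ℝ) ≤ m := Nat.cast_nonneg m
        rw [abs_le] at hre; linarith
      · exact (continuous_const.sub continuous_id).continuousAt
    have h2 : ContinuousAt (fun σ : ℂ => Complex.Gamma (σ + (D : ℂ))) σ := by
      apply ContinuousAt.comp
      · apply (Complex.differentiableAt_Gamma _ ?_).continuousAt
        intro m hm
        have := congrArg Complex.re hm
        simp only [Complex.add_re, Complex.neg_re, Complex.natCast_re] at this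
        have hD2 : (2:ℝ) ≤ (D:ℝ) := by exact_mod_cast hD
        have hmn : (0:ℝ) ≤ m := Nat.cast_nonneg m
        rw [abs_le] at hre; linarith
      · exact (continuous_id.add continuous_const).continuousAt
    exact continuousAt_const.mul ((h1.mul h2).div_const _)
  -- uniform convergence of G to G 0
  have hGcont : ContinuousOn (↿G) (U ×ˢ K) := by
    have : ContinuousOn (fun p : ℂ × ℂ => c p.1 * F p.1 p.2) (U ×ˢ K) := by
      apply ContinuousOn.mul
      · exact hc.comp continuousOn_fst (fun p hp => hp.1)
      · exact hFcont.mono (fun p hp => ⟨trivial, hKsub hp.2⟩)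
    exact this
  have hUK : IsCompact (U ×ˢ K) := (isCompact_closedBall _ _).prod hK
  have huc : UniformContinuousOn (↿G) (U ×ˢ K) :=
    hUK.uniformContinuousOn_of_continuous hGcont
  have hmemU : (0 : ℂ) ∈ U := by
    rw [hUdef]; simp [Metric.mem_closedBall]
  have hUnhds : U ∈ 𝓝 (0 : ℂ) := by
    rw [hUdef]; exact Metric.closedBall_mem_nhds _ (by norm_num)
  have hG0 : TendstoUniformlyOn G (G 0) (𝓝[U] (0:ℂ)) K :=
    huc.tendstoUniformlyOn hmemU
  rw [nhdsWithin_eq_nhds.2 hUnhds] at hG0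
  have hG1 : TendstoUniformlyOn G (G 0) (𝓝[{(0:ℂ)}ᶜ] (0:ℂ)) K :=
    fun u hu => ((hG0 u hu).filter_mono nhdsWithin_le_nhds)
  -- replace limit function by the constant
  have hF0 := F_zero_eq_one D F hFser hFz
  have hlim : Set.EqOn (G 0) (fun _ => ((volS D : ℝ) : ℂ)⁻¹) K := by
    intro z hz
    have : F 0 z = 1 := hF0 (hKsub hz)
    simp only [hGdef, hcdef, this, mul_one]
    rw [sub_zero, zero_add, Complex.Gamma_one, one_mul]
    exact key_complex D hD
  have hG2 : TendstoUniformlyOn G (fun _ => ((volS D : ℝ) : ℂ)⁻¹)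
      (𝓝[{(0:ℂ)}ᶜ] (0:ℂ)) K := hG1.congr_right hlim
  -- congr the approximants
  apply hG2.congr
  have hball1 : ∀ᶠ σ in 𝓝[{(0:ℂ)}ᶜ] (0:ℂ), ‖σ‖ < 1 := by
    apply Filter.Eventually.filter_mono nhdsWithin_le_nhds
    filter_upwards [Metric.ball_mem_nhds (0:ℂ) one_pos] with σ hσ
    rwa [Metric.mem_ball, Complex.dist_eq, sub_zero] at hσ
  filter_upwards [hball1, self_mem_nhdsWithin] with σ habs hσ0
  rw [Set.mem_compl_singleton_iff] at hσ0
  have hσD : σ + (D : ℂ) - 1 ≠ 0 := by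
    intro h
    have hσ : σ = 1 - (D : ℂ) := by linear_combination h
    rw [hσ] at habs
    have : ((1 : ℂ) - (D : ℂ)) = (((1 : ℝ) - (D : ℝ) : ℝ) : ℂ) := by push_cast; ring
    rw [this, Complex.norm_real, Real.norm_eq_abs] at habs
    have hD2 : (2:ℝ) ≤ (D:ℝ) := by exact_mod_cast hD
    rw [abs_of_nonpos (by linarith)] at habs
    linarith
  have e1 : Complex.Gamma (1 - σ) = -σ * Complex.Gamma (-σ) := by
    rw [show (1 - σ : ℂ) = -σ + 1 by ring, Complex.Gamma_add_one _ (neg_ne_zero.2 hσ0)]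
  have e2 : Complex.Gamma (σ + (D : ℂ)) = (σ + (D : ℂ) - 1) * Complex.Gamma (σ + (D : ℂ) - 1) := by
    rw [show (σ + (D : ℂ)) = (σ + (D : ℂ) - 1) + 1 by ring, Complex.Gamma_add_one _ hσD]
    ring_nf
  intro z _
  simp only [hGdef, hcdef, DeltaKG, e1, e2]
  ring
end

section
/- The operator P^{(β)}_{μν}φ := (∇_μ∇_ν + a_β g_{μν} + b_β g_{μν}□)φ with a_β = 2(1−D)/(2−βD), b_β = (β−2)/(2−βD), applied to any smooth scalar φ on unit-radius dS_D, produces a symmetric tensor h_{μν} = P^{(β)}_{μν}φ satisfying the generalized de Donder condition ∇^ν h_{μν} − (β/2)∇_μ h^ν{}_ν = 0, provided βD ≠ 2. -/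
/-- The generalized de Donder projector `P^{(β)}_{μν}φ = (∇_μ∇_ν + a_β g_{μν} + b_β g_{μν}□)φ`
with `a_β = 2(1−D)/(2−βD)`, `b_β = (β−2)/(2−βD)` produces, for every smooth scalar `φ` on
unit-radius `dS_D`, a symmetric tensor satisfying the generalized de Donder condition
`∇^ν h_{μν} − (β/2)∇_μ h^ν{}_ν = 0`, provided `βD ≠ 2`.

The differential calculus on `dS_D` is abstracted: `S` = scalar fields, `C` = covector
fields, `T` = symmetric 2-tensor fields, with the ℝ-linear operators `Box = □`,
`grad = ∇_μ`, `Hess = ∇_μ∇_ν`, `gMul = g_{μν}·`, `divg = ∇^ν`, `tr = g^{μν}`,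
subject to the identities valid on unit-radius de Sitter space (`R_{μν} = (D−1)g_{μν}`):
`∇^ν∇_μ∇_νφ = ∇_μ□φ + (D−1)∇_μφ`, `∇^ν(g_{μν}φ) = ∇_μφ`, `g^{μν}∇_μ∇_νφ = □φ`,
`g^{μν}g_{μν}φ = Dφ`. -/
theorem stmt11 (D : ℕ) (β : ℝ) (hβ : β * D ≠ 2)
    {S C T : Type*} [AddCommGroup S] [Module ℝ S] [AddCommGroup C] [Module ℝ C]
    [AddCommGroup T] [Module ℝ T]
    (Box : S →ₗ[ℝ] S) (grad : S →ₗ[ℝ] C) (Hess gMul : S →ₗ[ℝ] T)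
    (divg : T →ₗ[ℝ] C) (tr : T →ₗ[ℝ] S)
    (hdivHess : ∀ φ : S, divg (Hess φ) = grad (Box φ) + ((D : ℝ) - 1) • grad φ)
    (hdivg : ∀ φ : S, divg (gMul φ) = grad φ)
    (htrHess : ∀ φ : S, tr (Hess φ) = Box φ)
    (htrg : ∀ φ : S, tr (gMul φ) = (D : ℝ) • φ)
    (φ : S) :
    divg (Hess φ + (2 * (1 - (D : ℝ)) / (2 - β * D)) • gMul φ
        + ((β - 2) / (2 - β * D)) • gMul (Box φ))
      - (β / 2) • grad (tr (Hess φ + (2 * (1 - (D : ℝ)) / (2 - β * D)) • gMul φ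
        + ((β - 2) / (2 - β * D)) • gMul (Box φ))) = 0 := by
  have h2 : (2 - β * D) ≠ 0 := by
    intro h; apply hβ; linarith
  have h3 : (2 - (D : ℝ) * β) ≠ 0 := by
    intro h; apply hβ; linarith
  simp only [map_add, map_smul, hdivHess, hdivg, htrHess, htrg, smul_add, smul_smul]
  match_scalars <;> field_simp <;> ring
end
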